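/- Define f(x) := π/4 − (1/2)·arcsin(1 − x) − (1/2)·(1 − x)·√(2x − x²) − (2x/(3·√5))·√(10x − 3x²). Then f(x) < 0 for all x with 0 < x ≤ 1. -/

import Mathlib

open Real

theorem area_comparison_function_neg (x : ℝ) (h0 : 0 < x) (h1 : x ≤ 1) :
    Real.pi / 4 - (1 / 2) * Real.arcsin (1 - x)
      - (1 / 2) * (1 - x) * Real.sqrt (2 * x - x ^ 2)
      - (2 * x / (3 * Real.sqrt 5)) * Real.sqrt (10 * x - 3 * x ^ 2) < 0 := by
  set f : ℝ → ℝ := fun t => Real.pi / 4 - (1 / 2) * Real.arcsin (1 - t)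
      - (1 / 2) * (1 - t) * Real.sqrt (2 * t - t ^ 2)
      - (2 * t / (3 * Real.sqrt 5)) * Real.sqrt (10 * t - 3 * t ^ 2) with hf
  have hanti : StrictAntiOn f (Set.Icc 0 1) := by
    apply strictAntiOn_of_deriv_neg (convex_Icc 0 1)
    · apply Continuous.continuousOn
      rw [hf]
      continuity
    · intro y hy
      rw [interior_Icc] at hy
      obtain ⟨hy0, hy1⟩ := hy
      have ha : (0:ℝ) < 2*y - y^2 := by nlinarith
      have hb : (0:ℝ) < 10*y - 3*y^2 := by nlinarith
      have hc : (0:ℝ) < Real.sqrt 5 := Real.sqrt_pos.mpr (by norm_num)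
      have hinner : HasDerivAt (fun t : ℝ => 1 - t) (-1) y :=
        (hasDerivAt_id y).const_sub 1
      have hne1 : (1 - y : ℝ) ≠ -1 := by linarith
      have hne2 : (1 - y : ℝ) ≠ 1 := by linarith
      have hA : HasDerivAt (fun t : ℝ => Real.arcsin (1 - t))
          (1 / Real.sqrt (1 - (1-y)^2) * -1) y :=
        (Real.hasDerivAt_arcsin hne1 hne2).comp y hinner
      have h2 := (hA.const_mul (1/2 : ℝ)).const_sub (Real.pi/4)
      have hpoly1 : HasDerivAt (fun t : ℝ => 2*t - t^2) (2 - 2*y) y := by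
        have := ((hasDerivAt_id y).const_mul (2:ℝ)).sub (hasDerivAt_pow 2 y)
        simpa [Pi.sub_def] using this
      have hsq1 : HasDerivAt (fun t : ℝ => Real.sqrt (2*t - t^2))
          (1/(2*Real.sqrt (2*y - y^2)) * (2 - 2*y)) y :=
        (Real.hasDerivAt_sqrt ha.ne').comp y hpoly1
      have hlin : HasDerivAt (fun t : ℝ => (1/2 : ℝ) * (1 - t)) ((1/2 : ℝ) * -1) y :=
        ((hasDerivAt_id y).const_sub 1).const_mul (1/2)
      have hB := hlin.mul hsq1
      have hpoly2 : HasDerivAt (fun t : ℝ => 10*t - 3*t^2) (10 - 6*y) y := by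
        have hr : (10:ℝ) - 6*y = 10 - 3*(2*y) := by ring
        rw [hr]
        have := ((hasDerivAt_id y).const_mul (10:ℝ)).sub
          ((hasDerivAt_pow 2 y).const_mul (3:ℝ))
        simpa [Pi.sub_def] using this
      have hsq2 : HasDerivAt (fun t : ℝ => Real.sqrt (10*t - 3*t^2))
          (1/(2*Real.sqrt (10*y - 3*y^2)) * (10 - 6*y)) y :=
        (Real.hasDerivAt_sqrt hb.ne').comp y hpoly2
      have hlin2 : HasDerivAt (fun t : ℝ => 2*t/(3*Real.sqrt 5)) (2/(3*Real.sqrt 5)) y := by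
        have := ((hasDerivAt_id y).const_mul (2:ℝ)).div_const (3*Real.sqrt 5)
        simpa using this
      have hC := hlin2.mul hsq2
      have H : HasDerivAt f
          (-(1/2 * (1 / Real.sqrt (1 - (1-y)^2) * -1))
            - ((1/2 : ℝ) * -1 * Real.sqrt (2*y - y^2)
               + (1/2 : ℝ) * (1 - y) * (1/(2*Real.sqrt (2*y - y^2)) * (2 - 2*y)))
            - (2/(3*Real.sqrt 5) * Real.sqrt (10*y - 3*y^2)
               + 2*y/(3*Real.sqrt 5) * (1/(2*Real.sqrt (10*y - 3*y^2)) * (10 - 6*y)))) y :=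
        (h2.sub hB).sub hC
      rw [H.deriv]
      have hrw : 1 - (1-y)^2 = 2*y - y^2 := by ring
      rw [hrw]
      set a := Real.sqrt (2*y - y^2) with hadef
      set b := Real.sqrt (10*y - 3*y^2) with hbdef
      set c := Real.sqrt 5 with hcdef
      have ha' : 0 < a := Real.sqrt_pos.mpr ha
      have hb' : 0 < b := Real.sqrt_pos.mpr hb
      have ha2 : a^2 = 2*y - y^2 := Real.sq_sqrt ha.le
      have hb2 : b^2 = 10*y - 3*y^2 := Real.sq_sqrt hb.le
      have hc2 : c^2 = 5 := Real.sq_sqrt (by norm_num)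
      have hy5 : 0 < 2*y*(5-2*y) := by nlinarith
      have key : a*(c*b) < 2*y*(5-2*y) := by
        apply lt_of_pow_lt_pow_left₀ 2 hy5.le
        have hsq : (a*(c*b))^2 = 5*(2*y-y^2)*(10*y-3*y^2) := by
          rw [mul_pow, mul_pow, ha2, hb2, hc2]; ring
        rw [hsq]
        nlinarith [pow_pos hy0 4]
      have hDeq : -(1/2 * (1 / a * -1))
            - ((1/2 : ℝ) * -1 * a + (1/2 : ℝ) * (1 - y) * (1/(2*a) * (2 - 2*y)))
            - (2/(3*c) * b + 2*y/(3*c) * (1/(2*b) * (10 - 6*y)))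
          = (a*(c*b) - 2*y*(5-2*y))/(c*b) := by
        field_simp
        ring_nf
        linear_combination (-3*c*b) * ha2 + (-4*a) * hb2
      rw [hDeq]
      apply div_neg_of_neg_of_pos
      · linarith
      · positivity
  have h0mem : (0:ℝ) ∈ Set.Icc (0:ℝ) 1 := by constructor <;> norm_num
  have hxmem : x ∈ Set.Icc (0:ℝ) 1 := ⟨h0.le, h1⟩
  have hfx : f x < f 0 := hanti h0mem hxmem h0
  have hf0 : f 0 = 0 := by
    simp [hf, Real.arcsin_one]
    ring
  rw [hf0] at hfx
  exact hfx
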